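/- There exists a constant c > 0 such that for all sufficiently large n, P(n) ≥ c·(log n)/(log log n), where P(n) = max_{1 ≤ a ≤ n} P(a,n) and P(a,n) is the number of iterations of x ↦ n mod x starting at a needed to reach 0. -/

import Mathlib

/-- The iteration `a_0 = a`, `a_{j+1} = n mod a_j`. -/
def pseq (n a : ℕ) : ℕ → ℕ
  | 0 => a
  | j + 1 => n % pseq n a j


/-- `P(a,n)`: the least `k ≥ 1` with `a_k = 0`. -/
noncomputable def Psteps (n a : ℕ) : ℕ := sInf {k | 0 < k ∧ pseq n a k = 0}


/-- `P(n) = max_{1 ≤ a ≤ n} P(a,n)`. -/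
noncomputable def Pmax (n : ℕ) : ℕ := (Finset.Icc 1 n).sup (fun a => Psteps n a)

def uQ (K : ℕ) : ℕ → ℚ
  | 0 => 0
  | m+1 => (1 - uQ K m) / ((K : ℚ) - m)

lemma uQ1 (K : ℕ) : uQ K 1 = 1/(K:ℚ) := by simp [uQ]

lemma uQ2 (K : ℕ) (hK : 2 ≤ K) : uQ K 2 = 1/(K:ℚ) := by
  have hK2 : (2:ℚ) ≤ (K:ℚ) := by exact_mod_cast hK
  have hK0 : (K:ℚ) ≠ 0 := by linarith
  have hK1 : (K:ℚ) - 1 ≠ 0 := by intro h; nlinarith [h]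
  show (1 - uQ K 1) / ((K:ℚ) - 1) = 1/(K:ℚ)
  rw [uQ1]; field_simp

lemma uQ3 (K : ℕ) (hK : 4 ≤ K) : uQ K 3 = ((K:ℚ)-1)/((K:ℚ)*((K:ℚ)-2)) := by
  have hK2 : (4:ℚ) ≤ (K:ℚ) := by exact_mod_cast hK
  have hK0 : (K:ℚ) ≠ 0 := by linarith
  have hK1 : (K:ℚ) - 2 ≠ 0 := by intro h; nlinarith [h]
  show (1 - uQ K 2) / ((K:ℚ) - 2) = _
  rw [uQ2 K (by omega)]; field_simp

lemma uQ_bounds (K : ℕ) (hK : 4 ≤ K) : ∀ m, 3 ≤ m → m ≤ K →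
    1/(K:ℚ)^3 ≤ uQ K m - 1/((K:ℚ) - m + 2) ∧
    uQ K m - 1/((K:ℚ) - m + 2) ≤ 1/((((K:ℚ)-m+1))*(((K:ℚ)-m+2))*(((K:ℚ)-m+3))) := by
  have hKQ : (4:ℚ) ≤ (K:ℚ) := by exact_mod_cast hK
  have hK0 : (0:ℚ) < (K:ℚ) := by linarith
  have hK1 : (0:ℚ) < (K:ℚ)-1 := by linarith
  have hK2 : (0:ℚ) < (K:ℚ)-2 := by linarith
  intro m h3
  induction m, h3 using Nat.le_induction with
  | base =>
    intro _
    have hd : uQ K 3 - 1/((K:ℚ)-(3:ℕ)+2) = 1/((K:ℚ)*(((K:ℚ)-1)*((K:ℚ)-2))) := by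
      have n0 : (K:ℚ) ≠ 0 := ne_of_gt hK0
      have n1 : (K:ℚ)-1 ≠ 0 := ne_of_gt hK1
      have n2 : (K:ℚ)-2 ≠ 0 := ne_of_gt hK2
      rw [uQ3 K hK]
      push_cast
      rw [show ((K:ℚ)-3+2) = (K:ℚ)-1 from by ring]
      field_simp
      ring
    rw [hd]
    constructor
    · exact one_div_le_one_div_of_le (by positivity) (by nlinarith)
    · apply le_of_eq
      push_cast
      congr 1
      ring
  | succ m h3 ih =>
    intro hmK
    have hm4 : ((m:ℚ)+1) ≤ (K:ℚ) := by exact_mod_cast hmK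
    have hm3 : (3:ℚ) ≤ (m:ℚ) := by exact_mod_cast h3
    obtain ⟨ihl, ihu⟩ := ih (by omega)
    set q : ℚ := (K:ℚ) - m with hq
    have hq1 : 1 ≤ q := by simp only [hq]; linarith
    have hq3K : q + 3 ≤ (K:ℚ) := by simp only [hq]; linarith
    have hq0 : 0 < q := by linarith
    have h10 : 0 < q+1 := by linarith
    have h20 : 0 < q+2 := by linarith
    have h30 : 0 < q+3 := by linarith
    set d : ℚ := uQ K m - 1/(q+2) with hdd
    have hu : uQ K m = 1/(q+2) + d := by rw [hdd]; ring
    have hrec : uQ K (m+1) = (1 - uQ K m) / q := by rw [hq]; rfl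
    clear_value q d
    have key : uQ K (m+1) - 1/((K:ℚ)-((m:ℚ)+1)+2) = (1/(q+2) - (q+1)*d) / (q*(q+1)) := by
      rw [hrec, hu]
      have hh : (K:ℚ)-((m:ℚ)+1)+2 = q + 1 := by simp only [hq]; ring
      rw [hh]
      field_simp
      ring
    have goalcast : ((K:ℚ) - ((m+1:ℕ):ℚ) + 2) = (K:ℚ)-((m:ℚ)+1)+2 := by push_cast; ring
    rw [goalcast, key,
      show ((K:ℚ) - ((m+1:ℕ):ℚ) + 1) = q from by push_cast; rw [hq]; ring,
      show ((K:ℚ) - ((m+1:ℕ):ℚ) + 3) = q + 2 from by push_cast; rw [hq]; ring,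
      show ((K:ℚ) - ((m:ℚ)+1) + 2) = q + 1 from by rw [hq]; ring]
    have hdpos : 0 < d := lt_of_lt_of_le (by positivity) ihl
    constructor
    · have hnum : 1/(q+3) ≤ 1/(q+2) - (q+1)*d := by
        have h1 : (q+1)*d ≤ (q+1)*(1/((q+1)*(q+2)*(q+3))) := mul_le_mul_of_nonneg_left ihu h10.le
        have h2 : (q+1)*(1/((q+1)*(q+2)*(q+3))) = 1/((q+2)*(q+3)) := by
          field_simp
        have h3' : 1/(q+2) - 1/((q+2)*(q+3)) = 1/(q+3) := by
          rw [div_sub_div _ _ (ne_of_gt h20) (by positivity),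
            div_eq_div_iff (by positivity) (by positivity)]
          ring
        linarith
      have hKcube : (1:ℚ)/(K:ℚ)^3 ≤ 1/(q+3) * (1/(q*(q+1))) := by
        rw [one_div_mul_one_div]
        have hA : q*(q+1) ≤ (K:ℚ)*(K:ℚ) :=
          mul_le_mul (by linarith) (by linarith) (by linarith) (by linarith)
        have h1 : (q+3)*(q*(q+1)) ≤ (K:ℚ)*(q*(q+1)) :=
          mul_le_mul_of_nonneg_right hq3K (by positivity)
        have h2 : (K:ℚ)*(q*(q+1)) ≤ (K:ℚ)*((K:ℚ)*(K:ℚ)) :=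
          mul_le_mul_of_nonneg_left hA hK0.le
        have h3'' : (K:ℚ)^3 = (K:ℚ)*((K:ℚ)*(K:ℚ)) := by ring
        apply one_div_le_one_div_of_le (by positivity)
        linarith
      calc 1/(K:ℚ)^3 ≤ 1/(q+3) * (1/(q*(q+1))) := hKcube
        _ ≤ (1/(q+2) - (q+1)*d) * (1/(q*(q+1))) := by
            apply mul_le_mul_of_nonneg_right hnum (by positivity)
        _ = (1/(q+2) - (q+1)*d) / (q*(q+1)) := by ring
    · have hnum : 1/(q+2) - (q+1)*d ≤ 1/(q+2) := by by_contra hcon; push_neg at hcon; nlinarith [mul_pos h10 hdpos, hcon]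
      have heq : (1/(q+2))/(q*(q+1)) = 1/(q*(q+1)*(q+2)) := by
        rw [div_div]
        congr 1
        ring
      calc (1/(q+2) - (q+1)*d) / (q*(q+1)) ≤ (1/(q+2))/(q*(q+1)) := by gcongr
        _ = 1/(q*(q+1)*(q+2)) := heq

noncomputable def U (K j : ℕ) : ℚ := uQ K (K - j)

lemma U_rec (K j : ℕ) (h : j + 1 ≤ K) : U K (j+1) = 1 - ((j:ℚ)+1) * U K j := by
  have h1 : K - j = (K - (j+1)) + 1 := by omega
  have h2 : ((K - (j+1) : ℕ) : ℚ) = (K:ℚ) - ((j:ℚ)+1) := by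
    push_cast [Nat.cast_sub h]; ring
  have : U K j = (1 - U K (j+1)) / ((j:ℚ)+1) := by
    unfold U
    rw [h1]
    show (1 - uQ K (K - (j+1))) / ((K:ℚ) - (K - (j+1) : ℕ)) = _
    rw [h2]
    congr 1
    ring
  rw [this]
  have hj0 : ((j:ℚ)+1) ≠ 0 := by positivity
  field_simp
  ring

lemma U_bounds (K j : ℕ) (hK : 4 ≤ K) (hj : j ≤ K - 3) :
    1/(K:ℚ)^3 ≤ U K j - 1/((j:ℚ)+2) ∧
    U K j - 1/((j:ℚ)+2) ≤ 1/(((j:ℚ)+1)*((j:ℚ)+2)*((j:ℚ)+3)) := by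
  have h1 := uQ_bounds K hK (K - j) (by omega) (by omega)
  have h2 : ((K - j : ℕ) : ℚ) = (K:ℚ) - (j:ℚ) := by
    rw [Nat.cast_sub (by omega)]
  rw [h2] at h1
  have e1 : (K:ℚ) - ((K:ℚ) - (j:ℚ)) + 2 = (j:ℚ) + 2 := by ring
  have e2 : (K:ℚ) - ((K:ℚ) - (j:ℚ)) + 1 = (j:ℚ) + 1 := by ring
  have e3 : (K:ℚ) - ((K:ℚ) - (j:ℚ)) + 3 = (j:ℚ) + 3 := by ring
  rw [e1, e2, e3] at h1
  exact h1

lemma U_ge (K m : ℕ) (hK : 4 ≤ K) (h2 : 2 ≤ m) (hm : m ≤ K) : 1/(K:ℚ) ≤ uQ K m := by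
  rcases Nat.eq_or_lt_of_le h2 with h | h
  · rw [← h, uQ2 K (by omega)]
  · have h3 : 3 ≤ m := h
    obtain ⟨hl, _⟩ := uQ_bounds K hK m h3 hm
    have hKQ : (4:ℚ) ≤ (K:ℚ) := by exact_mod_cast hK
    have hmK : (m:ℚ) ≤ (K:ℚ) := by exact_mod_cast hm
    have hpos : 0 < (K:ℚ) - m + 2 := by linarith
    have : 1/(K:ℚ) ≤ 1/((K:ℚ) - m + 2) := by
      apply one_div_le_one_div_of_le hpos
      have : (2:ℚ) ≤ (m:ℚ) := by exact_mod_cast h2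
      linarith
    have hK3 : (0:ℚ) < 1/(K:ℚ)^3 := by positivity
    linarith

lemma pseq_shift (n a k : ℕ) : pseq n a (k+1) = pseq n (n % a) k := by
  induction k with
  | zero => rfl
  | succ k ih => show n % pseq n a (k+1) = _; rw [ih]; rfl

lemma pseq_zero_exists (n : ℕ) : ∀ a, 0 < a → ∃ k, 0 < k ∧ pseq n a k = 0 := by
  intro a
  induction a using Nat.strong_induction_on with
  | _ a ih =>
    intro ha
    rcases Nat.eq_zero_or_pos (n % a) with h | h
    · exact ⟨1, Nat.one_pos, by show n % pseq n a 0 = 0; exact h⟩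
    · obtain ⟨k, hk, hk0⟩ := ih (n % a) (Nat.mod_lt n ha) h
      exact ⟨k+1, Nat.succ_pos _, by rw [pseq_shift]; exact hk0⟩

set_option maxHeartbeats 2000000 in
lemma partA (K n : ℕ) (hK : 4 ≤ K) (hn : K^4 * K.factorial ≤ n) : K - 2 ≤ Pmax n := by
  have hKQ : (4:ℚ) ≤ (K:ℚ) := by exact_mod_cast hK
  have hnQ : ((K:ℚ))^4 * (K.factorial:ℚ) ≤ (n:ℚ) := by exact_mod_cast hn
  have hKfac : (1:ℚ) ≤ (K.factorial:ℚ) := by exact_mod_cast K.factorial_pos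
  have hn1 : (1:ℕ) ≤ n :=
    le_trans (Nat.mul_pos (pow_pos (by omega) 4) K.factorial_pos) hn
  have hn1Q : (1:ℚ) ≤ (n:ℚ) := by exact_mod_cast hn1
  obtain ⟨hU0l, hU0u⟩ := U_bounds K 0 hK (by omega)
  simp only [Nat.cast_zero] at hU0l hU0u
  have hK3pos : (0:ℚ) < 1/(K:ℚ)^3 := by positivity
  have hU0pos : (0:ℚ) < U K 0 := by
    have h02 : (0:ℚ) < 1/(0+2:ℚ) := by norm_num
    linarith [hU0l, hK3pos]
  obtain ⟨b, hb1, hbn, ε, hCb, hεl, hεu⟩ :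
      ∃ b:ℕ, 1 ≤ b ∧ b ≤ n ∧ ∃ ε:ℚ, (b:ℚ) = (n:ℚ) * U K 0 + ε ∧ 0 ≤ ε ∧ ε < 1 := by
    refine ⟨⌈(n:ℚ) * U K 0⌉₊, Nat.one_le_ceil_iff.mpr (by positivity), ?_,
      ((⌈(n:ℚ) * U K 0⌉₊ : ℚ) - (n:ℚ) * U K 0), by ring, ?_, ?_⟩
    · -- ceil ≤ n
      have h1 : ((⌈(n:ℚ) * U K 0⌉₊ : ℚ)) < (n:ℚ) * U K 0 + 1 :=
        Nat.ceil_lt_add_one (by positivity)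
      have h3 : U K 0 ≤ 2/3 := by
        have h02 : (1:ℚ)/((0+1)*(0+2)*(0+3)) = 1/6 := by norm_num
        have h05 : (1:ℚ)/(0+2) = 1/2 := by norm_num
        linarith [hU0u]
      have h4 : (n:ℚ) * U K 0 ≤ (n:ℚ) * (2/3) := mul_le_mul_of_nonneg_left h3 (by positivity)
      have hn3 : (3:ℚ) ≤ (n:ℚ) := by
        have h16 : (16:ℚ) ≤ (K:ℚ)^2 := by nlinarith
        have h256 : (256:ℚ) ≤ (K:ℚ)^4 := by nlinarith
        nlinarith
      have : ((⌈(n:ℚ) * U K 0⌉₊ : ℚ)) ≤ (n:ℚ) := by linarith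
      exact_mod_cast this
    · simp only [sub_nonneg]; exact Nat.le_ceil _
    · have := Nat.ceil_lt_add_one (show (0:ℚ) ≤ (n:ℚ) * U K 0 by positivity)
      linarith
  -- the step
  have step : ∀ j, j ≤ K - 3 →
      ((pseq n b j : ℚ) = (n:ℚ) * U K j + (-1:ℚ)^j * (j.factorial:ℚ) * ε) →
      ((j+1) * pseq n b j ≤ n ∧ n < (j+2) * pseq n b j ∧
        ((pseq n b (j+1) : ℚ) = (n:ℚ) * U K (j+1) + (-1:ℚ)^(j+1) * ((j+1).factorial:ℚ) * ε)) := by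
    intro j hj hC
    set B : ℕ := pseq n b j with hB
    have hjK : (j:ℚ) ≤ (K:ℚ) - 3 := by
      have : ((j:ℕ):ℚ) ≤ ((K-3:ℕ):ℚ) := by exact_mod_cast hj
      rwa [Nat.cast_sub (by omega)] at this
    obtain ⟨hdl, hdu⟩ := U_bounds K j hK hj
    have hrec := U_rec K j (by omega)
    have hU1 : 1/(K:ℚ) ≤ U K (j+1) := by
      unfold U
      exact U_ge K (K - (j+1)) hK (by omega) (by omega)
    have hfac_pos : (0:ℚ) < (j.factorial:ℚ) := by exact_mod_cast j.factorial_pos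
    set s : ℚ := (-1:ℚ)^j * (j.factorial:ℚ) * ε with hs
    have hs_lb : -(j.factorial:ℚ) < s := by
      rcases Nat.even_or_odd j with h | h
      · rw [hs, h.neg_one_pow]
        nlinarith [mul_nonneg hfac_pos.le hεl]
      · rw [hs, h.neg_one_pow]
        nlinarith [mul_lt_mul_of_pos_left hεu hfac_pos]
    have hs_ub : s ≤ (j.factorial:ℚ) := by
      rcases Nat.even_or_odd j with h | h
      · rw [hs, h.neg_one_pow]
        nlinarith [mul_lt_mul_of_pos_left hεu hfac_pos]
      · rw [hs, h.neg_one_pow]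
        nlinarith [mul_nonneg hfac_pos.le hεl]
    have hfacK : (j.factorial:ℚ) ≤ (K.factorial:ℚ) := by
      exact_mod_cast Nat.factorial_le (show j ≤ K by omega)
    have hnK : (K:ℚ)^3 * (K.factorial:ℚ) ≤ (n:ℚ) * (1/(K:ℚ)) := by
      rw [mul_one_div, le_div_iff₀ (by positivity)]
      calc (K:ℚ)^3 * (K.factorial:ℚ) * (K:ℚ) = (K:ℚ)^4 * (K.factorial:ℚ) := by ring
        _ ≤ (n:ℚ) := hnQ
    have key1 : ((j:ℚ)+1) * (B:ℚ) ≤ (n:ℚ) := by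
      rw [hC]
      have e : ((j:ℚ)+1) * ((n:ℚ) * U K j + s)
          = (n:ℚ) - (n:ℚ) * U K (j+1) + ((j:ℚ)+1) * s := by rw [hrec]; ring
      rw [e]
      have h1 : (n:ℚ) * (1/(K:ℚ)) ≤ (n:ℚ) * U K (j+1) :=
        mul_le_mul_of_nonneg_left hU1 (by positivity)
      have h3 : ((j:ℚ)+1) * (j.factorial:ℚ) ≤ (K:ℚ)^3 * (K.factorial:ℚ) := by
        have hjK3 : ((j:ℚ)+1) ≤ (K:ℚ)^3 := by
          have hK2 : (1:ℚ) ≤ (K:ℚ)^2 := by nlinarith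
          have hKK3 : (K:ℚ) ≤ (K:ℚ)^3 := by
            nlinarith [mul_le_mul_of_nonneg_left hK2 (show (0:ℚ) ≤ (K:ℚ) by linarith)]
          linarith
        exact mul_le_mul hjK3 hfacK hfac_pos.le (by positivity)
      have h4 : ((j:ℚ)+1) * s ≤ ((j:ℚ)+1) * (j.factorial:ℚ) :=
        mul_le_mul_of_nonneg_left hs_ub (by positivity)
      linarith
    have key2 : (n:ℚ) < ((j:ℚ)+2) * (B:ℚ) := by
      rw [hC]
      have hne : ((j:ℚ)+2) ≠ 0 := by positivity
      have e : ((j:ℚ)+2) * ((n:ℚ) * U K j + s)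
          = (n:ℚ) + ((j:ℚ)+2) * (n:ℚ) * (U K j - 1/((j:ℚ)+2)) + ((j:ℚ)+2) * s := by
        field_simp
        ring
      rw [e]
      have hd0 : 0 ≤ U K j - 1/((j:ℚ)+2) := le_trans hK3pos.le hdl
      have h1 : (n:ℚ) * (1/(K:ℚ)^3) ≤ (n:ℚ) * (U K j - 1/((j:ℚ)+2)) :=
        mul_le_mul_of_nonneg_left hdl (by positivity)
      have h1' : (n:ℚ) * (U K j - 1/((j:ℚ)+2)) ≤ ((j:ℚ)+2) * (n:ℚ) * (U K j - 1/((j:ℚ)+2)) := by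
        nlinarith [mul_nonneg (show (0:ℚ) ≤ (n:ℚ) by positivity) hd0]
      have h2 : (K:ℚ) * (K.factorial:ℚ) ≤ (n:ℚ) * (1/(K:ℚ)^3) := by
        rw [mul_one_div, le_div_iff₀ (by positivity)]
        nlinarith
      have h3 : -( ((j:ℚ)+2) * (j.factorial:ℚ)) < ((j:ℚ)+2) * s := by
        nlinarith [mul_lt_mul_of_pos_left hs_lb (show (0:ℚ) < (j:ℚ)+2 by positivity)]
      have h4 : ((j:ℚ)+2) * (j.factorial:ℚ) ≤ (K:ℚ) * (K.factorial:ℚ) :=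
        mul_le_mul (by linarith) hfacK hfac_pos.le (by positivity)
      linarith
    have key1N : (j+1) * B ≤ n := by
      have : (((j+1) * B : ℕ) : ℚ) ≤ (n:ℚ) := by push_cast; linarith [key1]
      exact_mod_cast this
    have key2N : n < (j+2) * B := by
      have : (n:ℚ) < (((j+2) * B : ℕ) : ℚ) := by push_cast; linarith [key2]
      exact_mod_cast this
    have hBpos : 0 < B := by
      rcases Nat.eq_zero_or_pos B with h | h
      · rw [h, Nat.mul_zero] at key2N; omega
      · exact h
    have hdiv : n / B = j + 1 := Nat.div_eq_of_lt_le key1N (by rw [show j+1+1 = j+2 from rfl]; exact key2N)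
    have hmod : pseq n b (j+1) = n - (j+1)*B := by
      show n % B = n - (j+1)*B
      have h := Nat.mod_add_div n B
      rw [hdiv, Nat.mul_comm B (j+1)] at h
      omega
    refine ⟨key1N, key2N, ?_⟩
    rw [hmod, Nat.cast_sub key1N]
    push_cast
    rw [hC, hrec, Nat.factorial_succ]
    push_cast
    ring
  -- the invariant
  have main : ∀ j, j ≤ K - 3 →
      ((pseq n b j : ℚ) = (n:ℚ) * U K j + (-1:ℚ)^j * (j.factorial:ℚ) * ε) := by
    intro j
    induction j with
    | zero =>
      intro _
      show ((b:ℚ)) = _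
      rw [hCb]
      norm_num [Nat.factorial]
    | succ j ihj =>
      intro hj
      exact (step j (by omega) (ihj (by omega))).2.2
  have pos : ∀ j, j ≤ K - 3 → 0 < pseq n b j := by
    intro j hj
    have h2 := (step j hj (main j hj)).2.1
    rcases Nat.eq_zero_or_pos (pseq n b j) with h | h
    · rw [h, Nat.mul_zero] at h2; omega
    · exact h
  -- Psteps lower bound
  have hPs : K - 2 ≤ Psteps n b := by
    obtain ⟨k0, hk0, hk00⟩ := pseq_zero_exists n b (by omega)
    show K - 2 ≤ sInf {k | 0 < k ∧ pseq n b k = 0}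
    have hne : {k | 0 < k ∧ pseq n b k = 0}.Nonempty := ⟨k0, ⟨hk0, hk00⟩⟩
    apply le_csInf hne
    intro x hx
    obtain ⟨hx0, hxz⟩ := hx
    by_contra hcon
    push_neg at hcon
    have hxK : x ≤ K - 3 := by omega
    have := pos x hxK
    omega
  calc K - 2 ≤ Psteps n b := hPs
    _ ≤ Pmax n := Finset.le_sup (Finset.mem_Icc.mpr ⟨hb1, hbn⟩)

theorem stmt_8 : ∃ c > (0:ℝ), ∃ N : ℕ, ∀ n : ℕ, N ≤ n →
    c * Real.log n / Real.log (Real.log n) ≤ (Pmax n : ℝ) := by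
  refine ⟨1/4, by norm_num, ⌈Real.exp 72⌉₊ + 1, ?_⟩
  intro n hn
  have hnpos : 0 < n := by omega
  have hnR : Real.exp 72 ≤ (n:ℝ) := by
    calc Real.exp 72 ≤ (⌈Real.exp 72⌉₊ : ℝ) := Nat.le_ceil _
      _ ≤ (n:ℝ) := by exact_mod_cast le_trans (Nat.le_succ _) hn
  set L : ℝ := Real.log n with hL
  set M : ℝ := Real.log L with hM
  have hL72 : 72 ≤ L := by
    rw [hL, Real.le_log_iff_exp_le (by exact_mod_cast hnpos)]
    exact hnR
  have hLpos : 0 < L := by linarith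
  have hM1 : 1 ≤ M := by
    rw [hM, Real.le_log_iff_exp_le hLpos]
    calc Real.exp 1 ≤ 2.7182818286 := (Real.exp_one_lt_d9).le
      _ ≤ L := by linarith
  have hMpos : 0 < M := by linarith
  -- log 24 ≤ 4
  have hlog24 : Real.log 24 ≤ 4 := by
    rw [Real.log_le_iff_le_exp (by norm_num)]
    have h1 : (2.7182818283:ℝ)^(4:ℕ) ≤ (Real.exp 1)^(4:ℕ) := by
      apply pow_le_pow_left₀ (by norm_num) (Real.exp_one_gt_d9).le
    rw [show (4:ℝ) = ((4:ℕ):ℝ) by norm_num, ← Real.exp_one_pow]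
    nlinarith [h1]
  have hM24 : M ≤ 3 + L/24 := by
    have h1 : M = Real.log 24 + Real.log (L/24) := by
      rw [hM, ← Real.log_mul (by norm_num) (by positivity)]
      congr 1
      field_simp
    have h2 : Real.log (L/24) ≤ L/24 - 1 := Real.log_le_sub_one_of_pos (by positivity)
    linarith
  have h12 : 12 * M ≤ L := by linarith
  set K : ℕ := ⌊L/(2*M)⌋₊ with hK
  have hK6 : 6 ≤ K := by
    rw [hK]
    apply Nat.le_floor
    rw [le_div_iff₀ (by positivity)]
    push_cast
    linarith
  have hKle : (K:ℝ) ≤ L/(2*M) := Nat.floor_le (by positivity)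
  have hKL : (K:ℝ) ≤ L := by
    calc (K:ℝ) ≤ L/(2*M) := hKle
      _ ≤ L/2 := div_le_div_of_nonneg_left hLpos.le (by norm_num) (by linarith)
      _ ≤ L := by linarith
  have hKpos : (0:ℝ) < (K:ℝ) := by
    have : (6:ℝ) ≤ (K:ℝ) := by exact_mod_cast hK6
    linarith
  have hlogK : Real.log K ≤ M := by
    rw [hM]
    exact Real.log_le_log hKpos hKL
  -- factorial bound
  have hpow : K^4 * K.factorial ≤ K^(K+4) := by
    calc K^4 * K.factorial ≤ K^4 * K^K := Nat.mul_le_mul_left _ (Nat.factorial_le_pow K)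
      _ = K^(K+4) := by rw [← pow_add]; ring_nf
  have hexp : ((K:ℝ))^(K+4) ≤ (n:ℝ) := by
    have hKpow_pos : (0:ℝ) < (K:ℝ)^(K+4) := by positivity
    rw [← Real.exp_log hKpow_pos, ← Real.exp_log (show (0:ℝ) < (n:ℝ) by exact_mod_cast hnpos)]
    apply Real.exp_le_exp.mpr
    rw [Real.log_pow]
    have h1 : ((K+4:ℕ):ℝ) * Real.log K ≤ ((K+4:ℕ):ℝ) * M := by
      apply mul_le_mul_of_nonneg_left hlogK (by positivity)
    have h2 : ((K+4:ℕ):ℝ) * M ≤ (L/(2*M) + 4) * M := by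
      apply mul_le_mul_of_nonneg_right ?_ hMpos.le
      push_cast
      linarith
    have h3 : (L/(2*M) + 4) * M = L/2 + 4*M := by
      field_simp
    have h4 : L/2 + 4*M ≤ L := by linarith
    calc ((K+4:ℕ):ℝ) * Real.log K ≤ ((K+4:ℕ):ℝ) * M := h1
      _ ≤ (L/(2*M) + 4) * M := h2
      _ = L/2 + 4*M := h3
      _ ≤ L := h4
  have hfac : K^4 * K.factorial ≤ n := by
    have : ((K^(K+4):ℕ):ℝ) ≤ (n:ℝ) := by push_cast; exact hexp
    have h5 : (K^(K+4):ℕ) ≤ n := by exact_mod_cast this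
    omega
  have hPA := partA K n (by omega) hfac
  -- conclude
  have hPmaxR : ((K:ℝ) - 2) ≤ (Pmax n : ℝ) := by
    have : ((K - 2 : ℕ):ℝ) ≤ (Pmax n : ℝ) := by exact_mod_cast hPA
    rwa [Nat.cast_sub (by omega)] at this
  have hKlb : L/(2*M) - 1 ≤ (K:ℝ) := by
    have := Nat.lt_floor_add_one (L/(2*M))
    rw [← hK] at this
    linarith
  have hfin : (1/4) * L / M ≤ L/(2*M) - 3 := by
    have e1 : (L/(2*M) - 3) * M = L/2 - 3*M := by field_simp
    rw [div_le_iff₀ hMpos, e1]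
    linarith
  calc (1/4) * L / M ≤ L/(2*M) - 3 := hfin
    _ ≤ (K:ℝ) - 2 := by linarith
    _ ≤ (Pmax n : ℝ) := hPmaxR
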